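/- Let $A, B$ be subsets of $[n]$. If a uniformly random permutation $\sigma$ of $[n]$ is chosen, the probability that $\sigma$ properly separates the pair $(A, B)$ equals $\binom{|A \cup B|}{|A \setminus B|}^{-1} \binom{|B|}{|A \cap B|}^{-1}$. -/

import Mathlib

/-- A permutation `σ` of `[n]` (where `x_s = σ s`) properly separates the pair `(A, B)`. -/
def ProperlySeparates {n : ℕ} (σ : Equiv.Perm (Fin n)) (A B : Finset (Fin n)) : Prop :=
  (∀ s l : Fin n, σ s ∈ A \ B → σ l ∈ B → s < l) ∧
  (∀ s l : Fin n, σ s ∈ A → σ l ∈ B \ A → s < l)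

open Finset Equiv

namespace Stmt10

variable {n : ℕ}

/-- `f` stacks `C1` below `C2` below `C3`. -/
def Stacked (C1 C2 C3 : Finset (Fin n)) (f : Equiv.Perm (Fin n)) : Prop :=
  (∀ x ∈ C1, ∀ y ∈ C2, f x < f y) ∧ (∀ x ∈ C1, ∀ y ∈ C3, f x < f y) ∧
    (∀ x ∈ C2, ∀ y ∈ C3, f x < f y)

lemma hcard (C1 C2 C3 : Finset (Fin n)) (h12 : Disjoint C1 C2) (h13 : Disjoint C1 C3)
    (h23 : Disjoint C2 C3) (g : ((C1 ∪ C2 ∪ C3)ᶜ : Finset (Fin n)) ↪ Fin n) :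
    ((Finset.univ.map g)ᶜ : Finset (Fin n)).card = C1.card + C2.card + C3.card := by
  have h1 : (Finset.univ.map g).card = ((C1 ∪ C2 ∪ C3)ᶜ : Finset (Fin n)).card := by
    simp [Finset.card_map]
  have hm : (C1 ∪ C2 ∪ C3).card = C1.card + C2.card + C3.card := by
    rw [Finset.card_union_of_disjoint (Finset.disjoint_union_left.2 ⟨h13, h23⟩),
      Finset.card_union_of_disjoint h12]
  have hle : (C1 ∪ C2 ∪ C3).card ≤ Fintype.card (Fin n) := Finset.card_le_univ _
  rw [Finset.card_compl, h1, Finset.card_compl]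
  omega

def phi (C1 C2 C3 : Finset (Fin n))
    (g : ((C1 ∪ C2 ∪ C3)ᶜ : Finset (Fin n)) ↪ Fin n)
    (o : Fin (C1.card + C2.card + C3.card) ≃o ((Finset.univ.map g)ᶜ : Finset (Fin n)))
    (e1 : Fin C1.card ≃ C1) (e2 : Fin C2.card ≃ C2) (e3 : Fin C3.card ≃ C3)
    (x : Fin n) : Fin n :=
  if h1 : x ∈ C1 then
    (o ⟨(e1.symm ⟨x, h1⟩).1, by have := (e1.symm ⟨x, h1⟩).isLt; omega⟩ : Fin n)
  else if h2 : x ∈ C2 then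
    (o ⟨C1.card + (e2.symm ⟨x, h2⟩).1, by have := (e2.symm ⟨x, h2⟩).isLt; omega⟩ : Fin n)
  else if h3 : x ∈ C3 then
    (o ⟨C1.card + C2.card + (e3.symm ⟨x, h3⟩).1,
      by have := (e3.symm ⟨x, h3⟩).isLt; omega⟩ : Fin n)
  else g ⟨x, by simp [Finset.mem_compl, Finset.mem_union, h1, h2, h3]⟩

section PhiLemmas

variable (C1 C2 C3 : Finset (Fin n)) (g : ((C1 ∪ C2 ∪ C3)ᶜ : Finset (Fin n)) ↪ Fin n)
  (o : Fin (C1.card + C2.card + C3.card) ≃o ((Finset.univ.map g)ᶜ : Finset (Fin n)))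
  (e1 : Fin C1.card ≃ C1) (e2 : Fin C2.card ≃ C2) (e3 : Fin C3.card ≃ C3)

lemma phi_injective (h12 : Disjoint C1 C2) (h13 : Disjoint C1 C3) (h23 : Disjoint C2 C3) :
    Function.Injective (phi C1 C2 C3 g o e1 e2 e3) := by
  have d12 := Finset.disjoint_left.1 h12
  have d13 := Finset.disjoint_left.1 h13
  have d23 := Finset.disjoint_left.1 h23
  have hin : ∀ z, z ∈ C1 ∪ C2 ∪ C3 →
      phi C1 C2 C3 g o e1 e2 e3 z ∈ ((Finset.univ.map g)ᶜ : Finset (Fin n)) := by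
    intro z hz; unfold phi; split_ifs with h1 h2 h3
    · exact Subtype.coe_prop _
    · exact Subtype.coe_prop _
    · exact Subtype.coe_prop _
    · simp [Finset.mem_union, h1, h2, h3] at hz
  have hout : ∀ z (hz : z ∉ C1 ∪ C2 ∪ C3),
      phi C1 C2 C3 g o e1 e2 e3 z = g ⟨z, Finset.mem_compl.2 hz⟩ := by
    intro z hz
    simp only [Finset.mem_union, not_or] at hz
    unfold phi
    rw [dif_neg hz.1.1, dif_neg hz.1.2, dif_neg hz.2]
  have hout' : ∀ z (hz : z ∉ C1 ∪ C2 ∪ C3),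
      phi C1 C2 C3 g o e1 e2 e3 z ∈ Finset.univ.map g := by
    intro z hz; rw [hout z hz]; exact Finset.mem_map_of_mem g (Finset.mem_univ _)
  intro x y hxy
  by_cases hxu : x ∈ C1 ∪ C2 ∪ C3 <;> by_cases hyu : y ∈ C1 ∪ C2 ∪ C3
  · -- both in the union
    by_cases hx1 : x ∈ C1 <;> by_cases hx2 : x ∈ C2 <;> by_cases hx3 : x ∈ C3 <;>
      by_cases hy1 : y ∈ C1 <;> by_cases hy2 : y ∈ C2 <;> by_cases hy3 : y ∈ C3 <;>
      first
        | exact absurd hx2 (d12 hx1) | exact absurd hx3 (d13 hx1) | exact absurd hx3 (d23 hx2)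
        | exact absurd hy2 (d12 hy1) | exact absurd hy3 (d13 hy1) | exact absurd hy3 (d23 hy2)
        | (have hF : False := by simp [Finset.mem_union, hx1, hx2, hx3] at hxu
           exact hF.elim)
        | (have hF : False := by simp [Finset.mem_union, hy1, hy2, hy3] at hyu
           exact hF.elim)
        | skip
    all_goals unfold phi at hxy
    all_goals
      simp only [hx1, hx2, hx3, hy1, hy2, hy3, dif_pos, dif_neg, not_false_iff] at hxy
    all_goals
      have h := o.injective (Subtype.coe_injective hxy)
    all_goals rw [Fin.mk.injEq] at h
    all_goals
      try have lx1 := (e1.symm ⟨x, hx1⟩).isLt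
    all_goals
      try have lx2 := (e2.symm ⟨x, hx2⟩).isLt
    all_goals
      try have lx3 := (e3.symm ⟨x, hx3⟩).isLt
    all_goals
      try have ly1 := (e1.symm ⟨y, hy1⟩).isLt
    all_goals
      try have ly2 := (e2.symm ⟨y, hy2⟩).isLt
    all_goals
      try have ly3 := (e3.symm ⟨y, hy3⟩).isLt
    all_goals
      first
        | (have h2 := e1.symm.injective
             (Fin.ext (show ((e1.symm ⟨x, hx1⟩ : Fin C1.card) : ℕ) = (e1.symm ⟨y, hy1⟩ : Fin C1.card) from by omega))
           exact congrArg Subtype.val h2)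
        | (have h2 := e2.symm.injective
             (Fin.ext (show ((e2.symm ⟨x, hx2⟩ : Fin C2.card) : ℕ) = (e2.symm ⟨y, hy2⟩ : Fin C2.card) from by omega))
           exact congrArg Subtype.val h2)
        | (have h2 := e3.symm.injective
             (Fin.ext (show ((e3.symm ⟨x, hx3⟩ : Fin C3.card) : ℕ) = (e3.symm ⟨y, hy3⟩ : Fin C3.card) from by omega))
           exact congrArg Subtype.val h2)
        | exact absurd h (by omega)
  · exact absurd (hout' y hyu) (Finset.mem_compl.1 (hxy ▸ hin x hxu))
  · exact absurd (hout' x hxu) (Finset.mem_compl.1 (hxy ▸ hin y hyu))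
  · rw [hout x hxu, hout y hyu] at hxy
    exact congrArg Subtype.val (g.injective hxy)

lemma phi_stacked (h12 : Disjoint C1 C2) (h13 : Disjoint C1 C3) (h23 : Disjoint C2 C3) :
    (∀ x ∈ C1, ∀ y ∈ C2, phi C1 C2 C3 g o e1 e2 e3 x < phi C1 C2 C3 g o e1 e2 e3 y) ∧
    (∀ x ∈ C1, ∀ y ∈ C3, phi C1 C2 C3 g o e1 e2 e3 x < phi C1 C2 C3 g o e1 e2 e3 y) ∧
    (∀ x ∈ C2, ∀ y ∈ C3, phi C1 C2 C3 g o e1 e2 e3 x < phi C1 C2 C3 g o e1 e2 e3 y) := by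
  have d12 := Finset.disjoint_left.1 h12
  have d13 := Finset.disjoint_left.1 h13
  have d23 := Finset.disjoint_left.1 h23
  refine ⟨?_, ?_, ?_⟩ <;> intro x hx y hy <;> unfold phi
  · rw [dif_pos hx, dif_neg (fun h => d12 h hy), dif_pos hy]
    refine Subtype.coe_lt_coe.2 (o.strictMono (Fin.mk_lt_mk.2 ?_))
    have := (e1.symm ⟨x, hx⟩).isLt
    omega
  · rw [dif_pos hx, dif_neg (fun h => d13 h hy), dif_neg (fun h => d23 h hy), dif_pos hy]
    refine Subtype.coe_lt_coe.2 (o.strictMono (Fin.mk_lt_mk.2 ?_))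
    have := (e1.symm ⟨x, hx⟩).isLt
    omega
  · rw [dif_neg (fun h => d12 h hx), dif_pos hx,
      dif_neg (fun h => d13 h hy), dif_neg (fun h => d23 h hy), dif_pos hy]
    refine Subtype.coe_lt_coe.2 (o.strictMono (Fin.mk_lt_mk.2 ?_))
    have := (e2.symm ⟨x, hx⟩).isLt
    omega

lemma phi_pos1 (x : Fin n) (hx : x ∈ C1) :
    phi C1 C2 C3 g o e1 e2 e3 x =
      (o ⟨(e1.symm ⟨x, hx⟩).1, by have := (e1.symm ⟨x, hx⟩).isLt; omega⟩ : Fin n) := by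
  unfold phi; rw [dif_pos hx]

lemma phi_pos2 (x : Fin n) (hx1 : x ∉ C1) (hx : x ∈ C2) :
    phi C1 C2 C3 g o e1 e2 e3 x =
      (o ⟨C1.card + (e2.symm ⟨x, hx⟩).1, by have := (e2.symm ⟨x, hx⟩).isLt; omega⟩ : Fin n) := by
  unfold phi; rw [dif_neg hx1, dif_pos hx]

lemma phi_pos3 (x : Fin n) (hx1 : x ∉ C1) (hx2 : x ∉ C2) (hx : x ∈ C3) :
    phi C1 C2 C3 g o e1 e2 e3 x =
      (o ⟨C1.card + C2.card + (e3.symm ⟨x, hx⟩).1,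
        by have := (e3.symm ⟨x, hx⟩).isLt; omega⟩ : Fin n) := by
  unfold phi; rw [dif_neg hx1, dif_neg hx2, dif_pos hx]

lemma phi_out (x : Fin n) (hx : x ∉ C1 ∪ C2 ∪ C3) :
    phi C1 C2 C3 g o e1 e2 e3 x = g ⟨x, Finset.mem_compl.2 hx⟩ := by
  simp only [Finset.mem_union, not_or] at hx
  unfold phi
  rw [dif_neg hx.1.1, dif_neg hx.1.2, dif_neg hx.2]

end PhiLemmas

lemma aux_lt {m : ℕ} {P : Finset (Fin n)} (o : Fin m ≃o P) (E : Finset (Fin n))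
    (hE : ∀ y ∈ E, y ∈ P) (t : P) (hlt : ∀ y ∈ E, (t : Fin n) < y) :
    E.card ≤ m - 1 - (o.symm t : ℕ) := by
  classical
  have hinj : Function.Injective (fun y : {z // z ∈ E} => o.symm ⟨y.1, hE _ y.2⟩) := by
    intro y z h
    have := o.symm.injective h
    exact Subtype.ext (congrArg Subtype.val this : _)
  have hcardE : E.card = (E.attach.image (fun y : {z // z ∈ E} => o.symm ⟨y.1, hE _ y.2⟩)).card := by
    rw [Finset.card_image_of_injective _ hinj, Finset.card_attach]
  rw [hcardE, ← Fin.card_Ioi (o.symm t)]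
  apply Finset.card_le_card
  intro j hj
  simp only [Finset.mem_image, Finset.mem_attach, true_and] at hj
  obtain ⟨y, rfl⟩ := hj
  rw [Finset.mem_Ioi]
  exact o.symm.strictMono (Subtype.mk_lt_mk.2 (hlt _ y.2))

lemma aux_gt {m : ℕ} {P : Finset (Fin n)} (o : Fin m ≃o P) (E : Finset (Fin n))
    (hE : ∀ y ∈ E, y ∈ P) (t : P) (hlt : ∀ y ∈ E, y < (t : Fin n)) :
    E.card ≤ (o.symm t : ℕ) := by
  classical
  have hinj : Function.Injective (fun y : {z // z ∈ E} => o.symm ⟨y.1, hE _ y.2⟩) := by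
    intro y z h
    have := o.symm.injective h
    exact Subtype.ext (congrArg Subtype.val this : _)
  have hcardE : E.card = (E.attach.image (fun y : {z // z ∈ E} => o.symm ⟨y.1, hE _ y.2⟩)).card := by
    rw [Finset.card_image_of_injective _ hinj, Finset.card_attach]
  rw [hcardE, ← Fin.card_Iio (o.symm t)]
  apply Finset.card_le_card
  intro j hj
  simp only [Finset.mem_image, Finset.mem_attach, true_and] at hj
  obtain ⟨y, rfl⟩ := hj
  rw [Finset.mem_Iio]
  exact o.symm.strictMono (Subtype.mk_lt_mk.2 (hlt _ y.2))

lemma card_stacked (C1 C2 C3 : Finset (Fin n)) (h12 : Disjoint C1 C2) (h13 : Disjoint C1 C3)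
    (h23 : Disjoint C2 C3) :
    Nat.card {f : Equiv.Perm (Fin n) // Stacked C1 C2 C3 f} *
        (C1.card + C2.card + C3.card).factorial =
      n.factorial * (C1.card.factorial * (C2.card.factorial * C3.card.factorial)) := by
  classical
  set R : Finset (Fin n) := (C1 ∪ C2 ∪ C3)ᶜ with hR
  let oo : ∀ g : (R : Finset (Fin n)) ↪ Fin n,
      Fin (C1.card + C2.card + C3.card) ≃o ((Finset.univ.map g)ᶜ : Finset (Fin n)) :=
    fun g => ((Finset.univ.map g)ᶜ).orderIsoOfFin (hcard C1 C2 C3 h12 h13 h23 g)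
  let D := ((R : Finset (Fin n)) ↪ Fin n) ×
      ((Fin C1.card ≃ C1) × ((Fin C2.card ≃ C2) × (Fin C3.card ≃ C3)))
  let Φ : D → {f : Equiv.Perm (Fin n) // Stacked C1 C2 C3 f} := fun d =>
    ⟨Equiv.ofBijective (phi C1 C2 C3 d.1 (oo d.1) d.2.1 d.2.2.1 d.2.2.2)
        (Finite.injective_iff_bijective.1
          (phi_injective C1 C2 C3 d.1 (oo d.1) d.2.1 d.2.2.1 d.2.2.2 h12 h13 h23)),
      (phi_stacked C1 C2 C3 d.1 (oo d.1) d.2.1 d.2.2.1 d.2.2.2 h12 h13 h23).1,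
      (phi_stacked C1 C2 C3 d.1 (oo d.1) d.2.1 d.2.2.1 d.2.2.2 h12 h13 h23).2.1,
      (phi_stacked C1 C2 C3 d.1 (oo d.1) d.2.1 d.2.2.1 d.2.2.2 h12 h13 h23).2.2⟩
  have d12 := Finset.disjoint_left.1 h12
  have d13 := Finset.disjoint_left.1 h13
  have d23 := Finset.disjoint_left.1 h23
  have hinj : Function.Injective Φ := by
    rintro ⟨g, e1, e2, e3⟩ ⟨g', e1', e2', e3'⟩ hΦ
    have hfun : ∀ x, phi C1 C2 C3 g (oo g) e1 e2 e3 x = phi C1 C2 C3 g' (oo g') e1' e2' e3' x :=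
      fun x => congrArg (fun (e : Equiv.Perm (Fin n)) => e x) (congrArg Subtype.val hΦ)
    have hg : g = g' := by
      apply Function.Embedding.ext
      rintro ⟨z, hz⟩
      have hz' : z ∉ C1 ∪ C2 ∪ C3 := Finset.mem_compl.1 hz
      have h1 := hfun z
      rw [phi_out C1 C2 C3 g (oo g) e1 e2 e3 z hz',
        phi_out C1 C2 C3 g' (oo g') e1' e2' e3' z hz'] at h1
      exact h1
    subst hg
    have he1 : e1 = e1' := by
      apply Equiv.ext; intro i
      have hx := (e1 i).2
      have h1 := hfun (e1 i).1
      rw [phi_pos1 C1 C2 C3 g (oo g) e1 e2 e3 (e1 i).1 hx,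
        phi_pos1 C1 C2 C3 g (oo g) e1' e2' e3' (e1 i).1 hx] at h1
      have h2 := (oo g).injective (Subtype.coe_injective h1)
      rw [Fin.mk.injEq] at h2
      have h3 : (⟨(e1 i).1, hx⟩ : {z // z ∈ C1}) = e1 i := rfl
      rw [h3, Equiv.symm_apply_apply] at h2
      have h4 : i = e1'.symm (e1 i) := Fin.ext (by omega)
      have h5 := (Equiv.apply_eq_iff_eq_symm_apply e1').2 h4
      exact h5.symm
    have he2 : e2 = e2' := by
      apply Equiv.ext; intro i
      have hx := (e2 i).2
      have hn1 : (e2 i).1 ∉ C1 := fun h => d12 h hx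
      have h1 := hfun (e2 i).1
      rw [phi_pos2 C1 C2 C3 g (oo g) e1 e2 e3 (e2 i).1 hn1 hx,
        phi_pos2 C1 C2 C3 g (oo g) e1' e2' e3' (e2 i).1 hn1 hx] at h1
      have h2 := (oo g).injective (Subtype.coe_injective h1)
      rw [Fin.mk.injEq] at h2
      have h3 : (⟨(e2 i).1, hx⟩ : {z // z ∈ C2}) = e2 i := rfl
      rw [h3, Equiv.symm_apply_apply] at h2
      have h4 : i = e2'.symm (e2 i) := Fin.ext (by omega)
      have h5 := (Equiv.apply_eq_iff_eq_symm_apply e2').2 h4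
      exact h5.symm
    have he3 : e3 = e3' := by
      apply Equiv.ext; intro i
      have hx := (e3 i).2
      have hn1 : (e3 i).1 ∉ C1 := fun h => d13 h hx
      have hn2 : (e3 i).1 ∉ C2 := fun h => d23 h hx
      have h1 := hfun (e3 i).1
      rw [phi_pos3 C1 C2 C3 g (oo g) e1 e2 e3 (e3 i).1 hn1 hn2 hx,
        phi_pos3 C1 C2 C3 g (oo g) e1' e2' e3' (e3 i).1 hn1 hn2 hx] at h1
      have h2 := (oo g).injective (Subtype.coe_injective h1)
      rw [Fin.mk.injEq] at h2
      have h3 : (⟨(e3 i).1, hx⟩ : {z // z ∈ C3}) = e3 i := rfl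
      rw [h3, Equiv.symm_apply_apply] at h2
      have h4 : i = e3'.symm (e3 i) := Fin.ext (by omega)
      have h5 := (Equiv.apply_eq_iff_eq_symm_apply e3').2 h4
      exact h5.symm
    rw [Prod.mk.injEq, Prod.mk.injEq, Prod.mk.injEq]
    exact ⟨rfl, he1, he2, he3⟩
  have hsurj : Function.Surjective Φ := by
    rintro ⟨f, hf1, hf2, hf3⟩
    let g : (R : Finset (Fin n)) ↪ Fin n :=
      ⟨fun z => f z.1, fun z w h => Subtype.ext (f.injective h)⟩
    set P : Finset (Fin n) := (Finset.univ.map g)ᶜ with hPdef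
    set o := oo g with ho
    have hSmem : ∀ t : Fin n, t ∈ Finset.univ.map g ↔ f.symm t ∈ R := by
      intro t; constructor
      · intro ht
        rw [Finset.mem_map] at ht
        obtain ⟨z, -, rfl⟩ := ht
        show f.symm (f z.1) ∈ R; rw [Equiv.symm_apply_apply]; exact z.2
      · intro ht
        rw [Finset.mem_map]
        exact ⟨⟨f.symm t, ht⟩, Finset.mem_univ _, by show f (f.symm t) = t; exact f.apply_symm_apply t⟩
    have hPmem : ∀ t : Fin n, t ∈ P ↔ f.symm t ∈ C1 ∪ C2 ∪ C3 := by
      intro t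
      rw [hPdef, Finset.mem_compl, hSmem, hR, Finset.mem_compl]
      exact not_not
    have hfP : ∀ x, x ∈ C1 ∪ C2 ∪ C3 → f x ∈ P := by
      intro x hx; rw [hPmem]; simpa using hx
    -- upper bound for C1-elements
    have hub1 : ∀ x (hx1 : x ∈ C1) (hm : f x ∈ P), ((o.symm ⟨f x, hm⟩ : Fin _) : ℕ) < C1.card := by
      intro x hx1 hm
      have hE : ∀ y ∈ (C2 ∪ C3).image f, y ∈ P := by
        intro y hy
        rw [Finset.mem_image] at hy
        obtain ⟨z, hz, rfl⟩ := hy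
        refine hfP z ?_
        rw [Finset.mem_union] at hz ⊢
        rw [Finset.mem_union]
        tauto
      have hlt : ∀ y ∈ (C2 ∪ C3).image f, ((⟨f x, hm⟩ : {t // t ∈ P}) : Fin n) < y := by
        intro y hy
        rw [Finset.mem_image] at hy
        obtain ⟨z, hz, rfl⟩ := hy
        rw [Finset.mem_union] at hz
        rcases hz with hz | hz
        · exact hf1 x hx1 z hz
        · exact hf2 x hx1 z hz
      have haux := aux_lt o ((C2 ∪ C3).image f) hE ⟨f x, hm⟩ hlt
      rw [Finset.card_image_of_injective _ f.injective,
        Finset.card_union_of_disjoint h23] at haux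
      have hx0 : 0 < C1.card := Finset.card_pos.2 ⟨x, hx1⟩
      have hlt2 := (o.symm ⟨f x, hm⟩).isLt
      omega
    -- lower bound for C2-elements
    have hlb2 : ∀ x (hx2 : x ∈ C2) (hm : f x ∈ P), C1.card ≤ ((o.symm ⟨f x, hm⟩ : Fin _) : ℕ) := by
      intro x hx2 hm
      have hE : ∀ y ∈ C1.image f, y ∈ P := by
        intro y hy
        rw [Finset.mem_image] at hy
        obtain ⟨z, hz, rfl⟩ := hy
        refine hfP z ?_
        rw [Finset.mem_union, Finset.mem_union]
        tauto
      have hlt : ∀ y ∈ C1.image f, y < ((⟨f x, hm⟩ : {t // t ∈ P}) : Fin n) := by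
        intro y hy
        rw [Finset.mem_image] at hy
        obtain ⟨z, hz, rfl⟩ := hy
        exact hf1 z hz x hx2
      have haux := aux_gt o (C1.image f) hE ⟨f x, hm⟩ hlt
      rwa [Finset.card_image_of_injective _ f.injective] at haux
    -- upper bound for C2-elements
    have hub2 : ∀ x (hx2 : x ∈ C2) (hm : f x ∈ P),
        ((o.symm ⟨f x, hm⟩ : Fin _) : ℕ) < C1.card + C2.card := by
      intro x hx2 hm
      have hE : ∀ y ∈ C3.image f, y ∈ P := by
        intro y hy
        rw [Finset.mem_image] at hy
        obtain ⟨z, hz, rfl⟩ := hy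
        refine hfP z ?_
        rw [Finset.mem_union, Finset.mem_union]
        tauto
      have hlt : ∀ y ∈ C3.image f, ((⟨f x, hm⟩ : {t // t ∈ P}) : Fin n) < y := by
        intro y hy
        rw [Finset.mem_image] at hy
        obtain ⟨z, hz, rfl⟩ := hy
        exact hf3 x hx2 z hz
      have haux := aux_lt o (C3.image f) hE ⟨f x, hm⟩ hlt
      rw [Finset.card_image_of_injective _ f.injective] at haux
      have hx0 : 0 < C2.card := Finset.card_pos.2 ⟨x, hx2⟩
      have hlt2 := (o.symm ⟨f x, hm⟩).isLt
      omega
    -- lower bound for C3-elements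
    have hlb3 : ∀ x (hx3 : x ∈ C3) (hm : f x ∈ P),
        C1.card + C2.card ≤ ((o.symm ⟨f x, hm⟩ : Fin _) : ℕ) := by
      intro x hx3 hm
      have hE : ∀ y ∈ (C1 ∪ C2).image f, y ∈ P := by
        intro y hy
        rw [Finset.mem_image] at hy
        obtain ⟨z, hz, rfl⟩ := hy
        refine hfP z ?_
        rw [Finset.mem_union] at hz ⊢
        rw [Finset.mem_union]
        tauto
      have hlt : ∀ y ∈ (C1 ∪ C2).image f, y < ((⟨f x, hm⟩ : {t // t ∈ P}) : Fin n) := by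
        intro y hy
        rw [Finset.mem_image] at hy
        obtain ⟨z, hz, rfl⟩ := hy
        rw [Finset.mem_union] at hz
        rcases hz with hz | hz
        · exact hf2 z hz x hx3
        · exact hf3 z hz x hx3
      have haux := aux_gt o ((C1 ∪ C2).image f) hE ⟨f x, hm⟩ hlt
      rwa [Finset.card_image_of_injective _ f.injective,
        Finset.card_union_of_disjoint h12] at haux
    -- classification of positions
    have hgen : ∀ i : Fin (C1.card + C2.card + C3.card),
        ∃ hu : f.symm ((o i : Fin n)) ∈ C1 ∪ C2 ∪ C3,
          ∀ hm : f (f.symm ((o i : Fin n))) ∈ P,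
            (o.symm ⟨f (f.symm ((o i : Fin n))), hm⟩) = i := by
      intro i
      have hm0 : (o i : Fin n) ∈ P := Subtype.coe_prop _
      refine ⟨(hPmem _).1 hm0, ?_⟩
      intro hm
      have h1 : (⟨f (f.symm ((o i : Fin n))), hm⟩ : {t // t ∈ P}) = o i :=
        Subtype.ext (f.apply_symm_apply _)
      rw [h1]
      exact OrderIso.symm_apply_apply o i
    have hcls1 : ∀ i : Fin (C1.card + C2.card + C3.card), (i : ℕ) < C1.card →
        f.symm ((o i : Fin n)) ∈ C1 := by
      intro i hi
      obtain ⟨hu, hfix⟩ := hgen i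
      set x := f.symm ((o i : Fin n)) with hx
      have hm : f x ∈ P := by
        rw [hx, f.apply_symm_apply]
        exact Subtype.coe_prop _
      rw [Finset.mem_union, Finset.mem_union] at hu
      rcases hu with (h | h) | h
      · exact h
      · exfalso
        have := hlb2 x h hm
        rw [hfix hm] at this
        omega
      · exfalso
        have := hlb3 x h hm
        rw [hfix hm] at this
        omega
    have hcls2 : ∀ i : Fin (C1.card + C2.card + C3.card),
        C1.card ≤ (i : ℕ) → (i : ℕ) < C1.card + C2.card →
        f.symm ((o i : Fin n)) ∈ C2 := by
      intro i hi1 hi2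
      obtain ⟨hu, hfix⟩ := hgen i
      set x := f.symm ((o i : Fin n)) with hx
      have hm : f x ∈ P := by
        rw [hx, f.apply_symm_apply]
        exact Subtype.coe_prop _
      rw [Finset.mem_union, Finset.mem_union] at hu
      rcases hu with (h | h) | h
      · exfalso
        have := hub1 x h hm
        rw [hfix hm] at this
        omega
      · exact h
      · exfalso
        have := hlb3 x h hm
        rw [hfix hm] at this
        omega
    have hcls3 : ∀ i : Fin (C1.card + C2.card + C3.card),
        C1.card + C2.card ≤ (i : ℕ) → f.symm ((o i : Fin n)) ∈ C3 := by
      intro i hi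
      obtain ⟨hu, hfix⟩ := hgen i
      set x := f.symm ((o i : Fin n)) with hx
      have hm : f x ∈ P := by
        rw [hx, f.apply_symm_apply]
        exact Subtype.coe_prop _
      rw [Finset.mem_union, Finset.mem_union] at hu
      rcases hu with (h | h) | h
      · exfalso
        have := hub1 x h hm
        rw [hfix hm] at this
        omega
      · exfalso
        have := hub2 x h hm
        rw [hfix hm] at this
        omega
      · exact h
    -- construct the three orderings
    have hidx1 : ∀ i : Fin C1.card, (i : ℕ) < C1.card + C2.card + C3.card := by
      intro i; have := i.isLt; omega
    have hidx2 : ∀ i : Fin C2.card, C1.card + (i : ℕ) < C1.card + C2.card + C3.card := by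
      intro i; have := i.isLt; omega
    have hidx3 : ∀ i : Fin C3.card,
        C1.card + C2.card + (i : ℕ) < C1.card + C2.card + C3.card := by
      intro i; have := i.isLt; omega
    let E1 : Fin C1.card → {z // z ∈ C1} := fun i =>
      ⟨f.symm ((o ⟨i.1, hidx1 i⟩ : Fin n)), hcls1 ⟨i.1, hidx1 i⟩ i.isLt⟩
    let E2 : Fin C2.card → {z // z ∈ C2} := fun i =>
      ⟨f.symm ((o ⟨C1.card + i.1, hidx2 i⟩ : Fin n)),
        hcls2 ⟨C1.card + i.1, hidx2 i⟩ (Nat.le_add_right _ _)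
          (by show C1.card + i.1 < C1.card + C2.card; have := i.isLt; omega)⟩
    let E3 : Fin C3.card → {z // z ∈ C3} := fun i =>
      ⟨f.symm ((o ⟨C1.card + C2.card + i.1, hidx3 i⟩ : Fin n)),
        hcls3 ⟨C1.card + C2.card + i.1, hidx3 i⟩ (Nat.le_add_right _ _)⟩
    have hE1inj : Function.Injective E1 := by
      intro i j h
      have h1 := f.symm.injective (congrArg Subtype.val h : _)
      have h2 := o.injective (Subtype.coe_injective h1)
      rw [Fin.mk.injEq] at h2
      exact Fin.ext h2
    have hE2inj : Function.Injective E2 := by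
      intro i j h
      have h1 := f.symm.injective (congrArg Subtype.val h : _)
      have h2 := o.injective (Subtype.coe_injective h1)
      rw [Fin.mk.injEq] at h2
      exact Fin.ext (by omega)
    have hE3inj : Function.Injective E3 := by
      intro i j h
      have h1 := f.symm.injective (congrArg Subtype.val h : _)
      have h2 := o.injective (Subtype.coe_injective h1)
      rw [Fin.mk.injEq] at h2
      exact Fin.ext (by omega)
    let e1 : Fin C1.card ≃ {z // z ∈ C1} := Equiv.ofBijective E1
      ((Fintype.bijective_iff_injective_and_card E1).2 ⟨hE1inj, by simp⟩)
    let e2 : Fin C2.card ≃ {z // z ∈ C2} := Equiv.ofBijective E2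
      ((Fintype.bijective_iff_injective_and_card E2).2 ⟨hE2inj, by simp⟩)
    let e3 : Fin C3.card ≃ {z // z ∈ C3} := Equiv.ofBijective E3
      ((Fintype.bijective_iff_injective_and_card E3).2 ⟨hE3inj, by simp⟩)
    refine ⟨⟨g, e1, e2, e3⟩, ?_⟩
    apply Subtype.ext
    apply Equiv.ext
    intro x
    suffices hsuff : phi C1 C2 C3 g o e1 e2 e3 x = f x by
      rw [ho] at hsuff
      exact hsuff
    by_cases hx1 : x ∈ C1
    · rw [phi_pos1 C1 C2 C3 g o e1 e2 e3 x hx1]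
      have hEi : E1 (e1.symm ⟨x, hx1⟩) = ⟨x, hx1⟩ := e1.apply_symm_apply ⟨x, hx1⟩
      have h1 : f.symm ((o ⟨(e1.symm ⟨x, hx1⟩).1, hidx1 _⟩ : Fin n)) = x :=
        congrArg Subtype.val hEi
      calc ((o ⟨(e1.symm ⟨x, hx1⟩).1, hidx1 _⟩ : {t // t ∈ P}) : Fin n)
          = f (f.symm ((o ⟨(e1.symm ⟨x, hx1⟩).1, hidx1 _⟩ : Fin n))) := (f.apply_symm_apply _).symm
        _ = f x := by rw [h1]
    · by_cases hx2 : x ∈ C2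
      · rw [phi_pos2 C1 C2 C3 g o e1 e2 e3 x hx1 hx2]
        have hEi : E2 (e2.symm ⟨x, hx2⟩) = ⟨x, hx2⟩ := e2.apply_symm_apply ⟨x, hx2⟩
        have h1 : f.symm ((o ⟨C1.card + (e2.symm ⟨x, hx2⟩).1, hidx2 _⟩ : Fin n)) = x :=
          congrArg Subtype.val hEi
        calc ((o ⟨C1.card + (e2.symm ⟨x, hx2⟩).1, hidx2 _⟩ : {t // t ∈ P}) : Fin n)
            = f (f.symm ((o ⟨C1.card + (e2.symm ⟨x, hx2⟩).1, hidx2 _⟩ : Fin n))) :=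
              (f.apply_symm_apply _).symm
          _ = f x := by rw [h1]
      · by_cases hx3 : x ∈ C3
        · rw [phi_pos3 C1 C2 C3 g o e1 e2 e3 x hx1 hx2 hx3]
          have hEi : E3 (e3.symm ⟨x, hx3⟩) = ⟨x, hx3⟩ := e3.apply_symm_apply ⟨x, hx3⟩
          have h1 : f.symm ((o ⟨C1.card + C2.card + (e3.symm ⟨x, hx3⟩).1, hidx3 _⟩ : Fin n)) = x :=
            congrArg Subtype.val hEi
          calc ((o ⟨C1.card + C2.card + (e3.symm ⟨x, hx3⟩).1, hidx3 _⟩ : {t // t ∈ P}) : Fin n)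
              = f (f.symm ((o ⟨C1.card + C2.card + (e3.symm ⟨x, hx3⟩).1, hidx3 _⟩ : Fin n))) :=
                (f.apply_symm_apply _).symm
            _ = f x := by rw [h1]
        · have hxu : x ∉ C1 ∪ C2 ∪ C3 := by
            simp [Finset.mem_union, hx1, hx2, hx3]
          rw [phi_out C1 C2 C3 g o e1 e2 e3 x hxu]
          rfl
  -- cardinality computation
  have hcardeq : Nat.card {f : Equiv.Perm (Fin n) // Stacked C1 C2 C3 f} = Nat.card D :=
    (Nat.card_congr (Equiv.ofBijective Φ ⟨hinj, hsurj⟩)).symm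
  have c1 : Fintype.card (Fin C1.card ≃ {z // z ∈ C1}) = C1.card.factorial := by
    rw [Fintype.card_equiv ((Fintype.equivFinOfCardEq (Fintype.card_coe C1)).symm)]
    simp
  have c2 : Fintype.card (Fin C2.card ≃ {z // z ∈ C2}) = C2.card.factorial := by
    rw [Fintype.card_equiv ((Fintype.equivFinOfCardEq (Fintype.card_coe C2)).symm)]
    simp
  have c3 : Fintype.card (Fin C3.card ≃ {z // z ∈ C3}) = C3.card.factorial := by
    rw [Fintype.card_equiv ((Fintype.equivFinOfCardEq (Fintype.card_coe C3)).symm)]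
    simp
  have cemb : Fintype.card ((R : Finset (Fin n)) ↪ Fin n) = n.descFactorial R.card := by
    rw [Fintype.card_embedding_eq]
    simp [Fintype.card_coe, Fintype.card_fin]
  have hD : Nat.card D = n.descFactorial R.card *
      (C1.card.factorial * (C2.card.factorial * C3.card.factorial)) := by
    rw [Nat.card_eq_fintype_card]
    show Fintype.card (((R : Finset (Fin n)) ↪ Fin n) ×
      ((Fin C1.card ≃ {z // z ∈ C1}) × ((Fin C2.card ≃ {z // z ∈ C2}) ×
        (Fin C3.card ≃ {z // z ∈ C3})))) = _
    rw [Fintype.card_prod, Fintype.card_prod, Fintype.card_prod, cemb, c1, c2, c3]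
  have hm : (C1 ∪ C2 ∪ C3).card = C1.card + C2.card + C3.card := by
    rw [Finset.card_union_of_disjoint (Finset.disjoint_union_left.2 ⟨h13, h23⟩),
      Finset.card_union_of_disjoint h12]
  have hmle : (C1 ∪ C2 ∪ C3).card ≤ n := by
    have := Finset.card_le_univ (C1 ∪ C2 ∪ C3)
    simpa using this
  have hRcard : R.card = n - (C1.card + C2.card + C3.card) := by
    rw [hR, Finset.card_compl, hm]
    simp
  have hkey : n.descFactorial R.card * (C1.card + C2.card + C3.card).factorial = n.factorial := by
    have h0 := Nat.factorial_mul_descFactorial (n := n) (k := R.card) (by omega)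
    rw [show n - R.card = C1.card + C2.card + C3.card from by omega] at h0
    rw [← h0]
    ring
  rw [hcardeq, hD]
  calc n.descFactorial R.card * (C1.card.factorial * (C2.card.factorial * C3.card.factorial)) *
        (C1.card + C2.card + C3.card).factorial
      = (n.descFactorial R.card * (C1.card + C2.card + C3.card).factorial) *
        (C1.card.factorial * (C2.card.factorial * C3.card.factorial)) := by ring
    _ = n.factorial * (C1.card.factorial * (C2.card.factorial * C3.card.factorial)) := by
        rw [hkey]

lemma sep_iff {n : ℕ} (A B : Finset (Fin n)) (σ : Equiv.Perm (Fin n)) :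
    ProperlySeparates σ A B ↔ Stacked (A \ B) (A ∩ B) (B \ A) σ.symm := by
  constructor
  · rintro ⟨h1, h2⟩
    refine ⟨?_, ?_, ?_⟩
    · intro x hx y hy
      exact h1 (σ.symm x) (σ.symm y) (by simpa using hx)
        (by simp only [Equiv.apply_symm_apply]; exact (Finset.mem_inter.1 hy).2)
    · intro x hx y hy
      exact h1 (σ.symm x) (σ.symm y) (by simpa using hx)
        (by simp only [Equiv.apply_symm_apply]; exact (Finset.mem_sdiff.1 hy).1)
    · intro x hx y hy
      exact h2 (σ.symm x) (σ.symm y)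
        (by simp only [Equiv.apply_symm_apply]; exact (Finset.mem_inter.1 hx).1)
        (by simpa using hy)
  · rintro ⟨s1, s2, s3⟩
    constructor
    · intro s l hs hl
      by_cases hA : σ l ∈ A
      · have := s1 (σ s) hs (σ l) (Finset.mem_inter.2 ⟨hA, hl⟩)
        simpa using this
      · have := s2 (σ s) hs (σ l) (Finset.mem_sdiff.2 ⟨hl, hA⟩)
        simpa using this
    · intro s l hs hl
      by_cases hB : σ s ∈ B
      · have := s3 (σ s) (Finset.mem_inter.2 ⟨hs, hB⟩) (σ l) hl
        simpa using this
      · have := s2 (σ s) (Finset.mem_sdiff.2 ⟨hs, hB⟩) (σ l) hl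
        simpa using this

end Stmt10

theorem stmt_10 (n : ℕ) (A B : Finset (Fin n)) :
    ((Nat.card {σ : Equiv.Perm (Fin n) // ProperlySeparates σ A B} : ℝ)) /
      (Nat.factorial n : ℝ) =
    ((((A ∪ B).card.choose ((A \ B).card) : ℕ) : ℝ))⁻¹ *
      (((B.card.choose ((A ∩ B).card) : ℕ) : ℝ))⁻¹ := by
  classical
  have hd12 : Disjoint (A \ B) (A ∩ B) :=
    Finset.disjoint_left.2 fun x hx h2 => (Finset.mem_sdiff.1 hx).2 (Finset.mem_inter.1 h2).2
  have hd13 : Disjoint (A \ B) (B \ A) :=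
    Finset.disjoint_left.2 fun x hx h2 => (Finset.mem_sdiff.1 h2).2 (Finset.mem_sdiff.1 hx).1
  have hd23 : Disjoint (A ∩ B) (B \ A) :=
    Finset.disjoint_left.2 fun x hx h2 => (Finset.mem_sdiff.1 h2).2 (Finset.mem_inter.1 hx).1
  set a := (A \ B).card with ha
  set c := (A ∩ B).card with hc
  set b := (B \ A).card with hb
  have hUcard : (A ∪ B).card = a + c + b := by
    have hunion : A \ B ∪ A ∩ B ∪ B \ A = A ∪ B := by
      ext x
      simp only [Finset.mem_union, Finset.mem_inter, Finset.mem_sdiff]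
      tauto
    rw [← hunion, Finset.card_union_of_disjoint (Finset.disjoint_union_left.2 ⟨hd13, hd23⟩),
      Finset.card_union_of_disjoint hd12]
  have hBcard : c + b = B.card := by
    have hunion : A ∩ B ∪ B \ A = B := by
      ext x
      simp only [Finset.mem_union, Finset.mem_inter, Finset.mem_sdiff]
      tauto
    rw [← hunion, Finset.card_union_of_disjoint hd23]
  have hcount := Stmt10.card_stacked (A \ B) (A ∩ B) (B \ A) hd12 hd13 hd23
  let es : Equiv.Perm (Fin n) ≃ Equiv.Perm (Fin n) :=
    ⟨fun σ => σ.symm, fun σ => σ.symm, fun σ => σ.symm_symm, fun σ => σ.symm_symm⟩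
  have hequiv : Nat.card {σ : Equiv.Perm (Fin n) // ProperlySeparates σ A B} =
      Nat.card {f : Equiv.Perm (Fin n) // Stmt10.Stacked (A \ B) (A ∩ B) (B \ A) f} :=
    Nat.card_congr (Equiv.subtypeEquiv es (fun σ => Stmt10.sep_iff A B σ))
  rw [hequiv, hUcard, ← hBcard]
  set K := Nat.card {f : Equiv.Perm (Fin n) // Stmt10.Stacked (A \ B) (A ∩ B) (B \ A) f} with hK
  -- arithmetic
  have e1 := Nat.choose_mul_factorial_mul_factorial (show a ≤ a + c + b by omega)
  rw [show a + c + b - a = c + b from by omega] at e1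
  have e2 := Nat.choose_mul_factorial_mul_factorial (show c ≤ c + b by omega)
  rw [show c + b - c = b from by omega] at e2
  have e3 : (a + c + b).choose a * ((c + b).choose c) *
      (a.factorial * (c.factorial * b.factorial)) = (a + c + b).factorial := by
    rw [← e1, ← e2]; ring
  have key : K * ((a + c + b).choose a * ((c + b).choose c)) = n.factorial := by
    have hpos : 0 < a.factorial * (c.factorial * b.factorial) :=
      Nat.mul_pos (Nat.factorial_pos _) (Nat.mul_pos (Nat.factorial_pos _) (Nat.factorial_pos _))
    refine Nat.eq_of_mul_eq_mul_right hpos ?_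
    calc K * ((a + c + b).choose a * ((c + b).choose c)) *
          (a.factorial * (c.factorial * b.factorial))
        = K * ((a + c + b).choose a * ((c + b).choose c) *
            (a.factorial * (c.factorial * b.factorial))) := by ring
      _ = K * (a + c + b).factorial := by rw [e3]
      _ = n.factorial * (a.factorial * (c.factorial * b.factorial)) := hcount
  have keyR : (K : ℝ) * (((a + c + b).choose a : ℝ) * ((c + b).choose c : ℝ)) =
      (n.factorial : ℝ) := by
    exact_mod_cast congrArg (Nat.cast : ℕ → ℝ) key
  have hn0 : (n.factorial : ℝ) ≠ 0 := Nat.cast_ne_zero.2 (Nat.factorial_ne_zero n)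
  have hx0 : (((a + c + b).choose a : ℕ) : ℝ) ≠ 0 :=
    Nat.cast_ne_zero.2 (Nat.choose_pos (show a ≤ a + c + b by omega)).ne'
  have hy0 : (((c + b).choose c : ℕ) : ℝ) ≠ 0 :=
    Nat.cast_ne_zero.2 (Nat.choose_pos (show c ≤ c + b by omega)).ne'
  field_simp
  linear_combination keyR
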